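/- Let (W,S) be a Coxeter system and v ∈ W with reduced expression s₁⋯s_k. Define P̄^v := (id − P^{{s₁}})(id − P^{{s₂}})⋯(id − P^{{s_k}}) ∈ End(V_W). Then P̄^v = Σ_{u ≤ v} (−1)^{ℓ(u)} P^u, where the sum is over the Bruhat interval [e,v]. In particular P̄^v is independent of the chosen reduced expression. -/

import Mathlib

open CoxeterSystem

variable {B W : Type*} [Group W] {M : CoxeterMatrix B}

/-- The projection `P^{{s}}` onto `W^{{s}}`: removes a trailing `s` if that shortens `w`. -/
noncomputable def CoxeterSystem.projSimple (cs : CoxeterSystem M W) (s : B) (w : W) : W :=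
  if cs.length (w * cs.simple s) < cs.length w then w * cs.simple s else w

/-- For a word `ω = s₁ ⋯ s_k`, the composition `P^{{s₁}} ∘ ⋯ ∘ P^{{s_k}}`. -/
noncomputable def CoxeterSystem.projWord (cs : CoxeterSystem M W) (ω : List B) : W → W :=
  ω.foldr (fun s g => cs.projSimple s ∘ g) id

/-- The Bruhat order, via the subword property: `u ≤ v` iff some reduced word for `v`
has a subword whose product is `u`. -/
def CoxeterSystem.bruhatLE (cs : CoxeterSystem M W) (u v : W) : Prop :=
  ∃ ω : List B, cs.IsReduced ω ∧ cs.wordProd ω = v ∧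
    ∃ ω' : List B, ω'.Sublist ω ∧ cs.wordProd ω' = u

/-- The linearized projection `P^{{s}}` on the free `ℤ`-module on `W`. -/
noncomputable def CoxeterSystem.projS (cs : CoxeterSystem M W) (s : B) :
    Module.End ℤ (W →₀ ℤ) :=
  Finsupp.lmapDomain ℤ ℤ (cs.projSimple s)

/-- For a word `ω = s₁ ⋯ s_k`, the endomorphism `(id − P^{{s₁}}) ⋯ (id − P^{{s_k}})`. -/
noncomputable def CoxeterSystem.projBarWord (cs : CoxeterSystem M W) (ω : List B) :
    Module.End ℤ (W →₀ ℤ) :=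
  ω.foldr (fun s g => (1 - cs.projS s) * g) 1

open List

namespace CoxeterSystem

variable (cs : CoxeterSystem M W)

local prefix:100 "s" => cs.simple
local prefix:100 "π" => cs.wordProd
local prefix:100 "ℓ" => cs.length
local prefix:100 "ris" => cs.rightInvSeq

section SE

variable [DecidableEq W]

/-- Sign-flipping action of a generator on `W × ℤˣ`. -/
noncomputable def sgnFun (i : B) : Function.End (W × ℤˣ) :=
  fun p => (s i * p.1 * s i, if p.1 = s i then -p.2 else p.2)

theorem prod_sgnFun_apply (ω : List B) (p : W × ℤˣ) :
    ((ω.map cs.sgnFun).prod : Function.End (W × ℤˣ)) p =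
      (π ω * p.1 * (π ω)⁻¹, ((-1 : ℤˣ) ^ ((ris ω).count p.1)) * p.2) := by
  induction ω with
  | nil => simp [rightInvSeq, wordProd_nil]; rfl
  | cons i ω ih =>
      have : ((i :: ω).map cs.sgnFun).prod = cs.sgnFun i * (ω.map cs.sgnFun).prod := by
        simp
      rw [this]
      show cs.sgnFun i (((ω.map cs.sgnFun).prod : Function.End (W × ℤˣ)) p) = _
      rw [ih]
      simp only [sgnFun, rightInvSeq, wordProd_cons, List.count_cons]
      have hinv : (s i * π ω)⁻¹ = (π ω)⁻¹ * s i := by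
        rw [mul_inv_rev, cs.inv_simple]
      rw [Prod.mk.injEq]
      constructor
      · rw [hinv]; group
      · have hcond : (π ω * p.1 * (π ω)⁻¹ = s i) ↔ ((π ω)⁻¹ * s i * π ω = p.1) := by
          constructor
          · intro h; rw [← h]; group
          · intro h; rw [← h]; group
        by_cases hc : (π ω)⁻¹ * s i * π ω = p.1
        · rw [if_pos (hcond.mpr hc), if_pos (by simpa using hc), pow_succ, mul_neg_one, neg_mul]
        · rw [if_neg (fun hh => hc (hcond.mp hh)), if_neg (by simpa using hc), add_zero]

/-- The word `(i i')^k`. -/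
def pairWord (i i' : B) : ℕ → List B
  | 0 => []
  | k + 1 => i :: i' :: pairWord i i' k

theorem wordProd_pairWord (i i' : B) (k : ℕ) :
    π (pairWord i i' k) = (s i * s i') ^ k := by
  induction k with
  | zero => simp [pairWord, wordProd_nil]
  | succ k ih => rw [pairWord, wordProd_cons, wordProd_cons, ih, pow_succ']; group

theorem prod_map_pairWord {G : Type*} [Monoid G] (f : B → G) (i i' : B) (k : ℕ) :
    ((pairWord i i' k).map f).prod = (f i * f i') ^ k := by
  induction k with
  | zero => simp [pairWord]
  | succ k ih => rw [pairWord, List.map_cons, List.map_cons, List.prod_cons, List.prod_cons,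
      ih, pow_succ', mul_assoc]

/-- The sequence `(s i' s i)^j s i'`. -/
def aSeq (i i' : B) (j : ℕ) : W := (s i' * s i) ^ j * s i'

theorem semiconj_aux (i i' : B) (k : ℕ) :
    s i' * (s i * s i') ^ k = (s i' * s i) ^ k * s i' := by
  have : SemiconjBy (s i') (s i * s i') (s i' * s i) := by
    unfold SemiconjBy; group
  exact (this.pow_right k).eq

theorem ris_pairWord (i i' : B) (k : ℕ) :
    ris (pairWord i i' k) = ((List.range (2 * k)).reverse).map (cs.aSeq i i') := by
  induction k with
  | zero => simp [pairWord]
  | succ k ih =>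
      have h2 : 2 * (k + 1) = (2 * k) + 1 + 1 := by ring
      rw [pairWord, h2, List.range_succ, List.range_succ]
      simp only [List.reverse_append, List.reverse_cons, List.reverse_nil]
      show ris (i :: i' :: pairWord i i' k) = _
      have hris : ris (i :: i' :: pairWord i i' k) =
          ((π (i' :: pairWord i i' k))⁻¹ * s i * π (i' :: pairWord i i' k)) ::
          ((π (pairWord i i' k))⁻¹ * s i' * π (pairWord i i' k)) :: ris (pairWord i i' k) := rfl
      rw [hris, ih]
      have hw : π (pairWord i i' k) = (s i * s i') ^ k := cs.wordProd_pairWord i i' k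
      have hwinv : (π (pairWord i i' k))⁻¹ = (s i' * s i) ^ k := by
        rw [hw, ← inv_pow, mul_inv_rev, cs.inv_simple, cs.inv_simple]
      have e2 : (π (pairWord i i' k))⁻¹ * s i' * π (pairWord i i' k) = cs.aSeq i i' (2 * k) := by
        rw [hwinv, hw, aSeq, two_mul, pow_add, mul_assoc, cs.semiconj_aux, ← mul_assoc]
      have e1 : (π (i' :: pairWord i i' k))⁻¹ * s i * π (i' :: pairWord i i' k)
          = cs.aSeq i i' (2 * k + 1) := by
        rw [wordProd_cons, mul_inv_rev, cs.inv_simple, hwinv, hw, aSeq]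
        calc (s i' * s i) ^ k * s i' * s i * (s i' * (s i * s i') ^ k)
            = (s i' * s i) ^ k * (s i' * s i * (s i' * (s i * s i') ^ k)) := by
              group
          _ = (s i' * s i) ^ k * (s i' * s i * ((s i' * s i) ^ k * s i')) := by
              rw [cs.semiconj_aux]
          _ = (s i' * s i) ^ (2 * k + 1) * s i' := by
              rw [← mul_assoc, ← pow_succ, ← mul_assoc, ← pow_add]
              congr 2
              ring
      rw [e1, e2]
      simp

theorem aSeq_add_M (i i' : B) (j : ℕ) :
    cs.aSeq i i' (M i i' + j) = cs.aSeq i i' j := by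
  unfold aSeq
  rw [pow_add, cs.simple_mul_simple_pow' i i', one_mul]

theorem even_count_ris_pairWord (i i' : B) (t : W) :
    Even ((ris (pairWord i i' (M i i'))).count t) := by
  rw [cs.ris_pairWord, List.map_reverse, List.count_reverse]
  have hsplit : List.range (2 * M i i') = List.range (M i i') ++
      (List.range (M i i')).map (M i i' + ·) := by
    rw [two_mul, List.range_add]
  rw [hsplit, List.map_append, List.count_append, List.map_map]
  have : (List.range (M i i')).map (cs.aSeq i i' ∘ (M i i' + ·)) =
      (List.range (M i i')).map (cs.aSeq i i') := by
    apply List.map_congr_left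
    intro j _
    exact cs.aSeq_add_M i i' j
  rw [this]
  exact ⟨_, rfl⟩

theorem sgnFun_liftable : M.IsLiftable cs.sgnFun := by
  intro i i'
  have h1 : ((cs.sgnFun i * cs.sgnFun i') ^ M i i' : Function.End (W × ℤˣ))
      = ((pairWord i i' (M i i')).map cs.sgnFun).prod := (prod_map_pairWord cs.sgnFun i i' (M i i')).symm
  funext p
  rw [h1]
  show ((pairWord i i' (M i i')).map cs.sgnFun).prod p = p
  rw [cs.prod_sgnFun_apply, cs.wordProd_pairWord, cs.simple_mul_simple_pow,
    (cs.even_count_ris_pairWord i i' p.1).neg_one_pow]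
  simp

noncomputable def sgnHom : W →* Function.End (W × ℤˣ) :=
  cs.lift ⟨cs.sgnFun, cs.sgnFun_liftable⟩

theorem sgnHom_wordProd (ω : List B) : cs.sgnHom (π ω) = (ω.map cs.sgnFun).prod := by
  rw [wordProd, MonoidHom.map_list_prod, List.map_map]
  congr 1
  apply List.map_congr_left
  intro j _
  exact cs.lift_apply_simple cs.sgnFun_liftable j

theorem count_ris_parity {ω ω' : List B} (h : π ω = π ω') (t : W) :
    ((-1 : ℤˣ) ^ ((ris ω).count t)) = (-1) ^ ((ris ω').count t) := by
  have h1 := cs.prod_sgnFun_apply ω (t, 1)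
  have h2 := cs.prod_sgnFun_apply ω' (t, 1)
  rw [← cs.sgnHom_wordProd] at h1 h2
  rw [h] at h1
  have h3 := congrArg Prod.snd (h1.symm.trans h2)
  simpa using h3

theorem ris_append (α β : List B) :
    ris (α ++ β) = (ris α).map (fun x => (π β)⁻¹ * x * π β) ++ ris β := by
  induction α with
  | nil => simp
  | cons a α ih =>
      show ((π (α ++ β))⁻¹ * s a * π (α ++ β)) :: ris (α ++ β) = _
      rw [ih]
      show _ = ((π β)⁻¹ * ((π α)⁻¹ * s a * π α) * π β) :: ((ris α).map _ ++ ris β)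
      rw [wordProd_append]
      congr 1
      group

theorem count_eq_zero_of_not_rightInversion {ω : List B} (hred : cs.IsReduced ω) {t : W}
    (h : ¬ ℓ (π ω * t) < ℓ (π ω)) : (ris ω).count t = 0 := by
  rw [List.count_eq_zero]
  intro hmem
  exact h (cs.isRightInversion_of_mem_rightInvSeq hred hmem).2

theorem mem_ris_aux (ω : List B) (u : W) (i : B) (hlen : ℓ u < ℓ (u * s i))
    (hl : ℓ (π ω * (u * s i * u⁻¹)) < ℓ (π ω)) : u * s i * u⁻¹ ∈ ris ω := by
  set t := u * s i * u⁻¹ with ht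
  have ht2 : t * t = 1 := by
    rw [ht]
    have h := cs.simple_mul_simple_self i
    calc u * s i * u⁻¹ * (u * s i * u⁻¹) = u * (s i * s i) * u⁻¹ := by group
      _ = 1 := by rw [h]; group
  obtain ⟨υ, hυred, hυ⟩ := cs.exists_reduced_word' u
  obtain ⟨σ, hσred, hσ⟩ := cs.exists_reduced_word' (π ω * t)
  set τ : List B := υ ++ i :: υ.reverse with hτ
  have hπrev : π υ.reverse = u⁻¹ := by rw [wordProd_reverse, ← hυ]
  have hπτ : π τ = t := by
    rw [hτ, wordProd_append, wordProd_cons, hπrev, ← hυ, ht, mul_assoc]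
  have hπΞ : π (σ ++ τ) = π ω := by
    rw [wordProd_append, ← hσ, hπτ, mul_assoc, ht2, mul_one]
  -- count t in ris (σ ++ τ) = 1
  have hc1 : ((ris σ).map (fun x => (π τ)⁻¹ * x * π τ)).count t = 0 := by
    have hinj : Function.Injective (fun x : W => (π τ)⁻¹ * x * π τ) := by
      intro x y hxy
      simpa using hxy
    have hform : t = (fun x : W => (π τ)⁻¹ * x * π τ) t := by
      show t = (π τ)⁻¹ * t * π τ
      rw [hπτ, inv_eq_of_mul_eq_one_right ht2, ht2, one_mul]
    rw [hform, List.count_map_of_injective _ _ hinj]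
    apply cs.count_eq_zero_of_not_rightInversion hσred
    rw [← hσ, mul_assoc, ht2, mul_one]
    omega
  have hc2 : ((ris υ).map (fun x => (π (i :: υ.reverse))⁻¹ * x * π (i :: υ.reverse))).count t
      = 0 := by
    have hinj : Function.Injective
        (fun x : W => (π (i :: υ.reverse))⁻¹ * x * π (i :: υ.reverse)) := by
      intro x y hxy
      simpa using hxy
    have hπc : π (i :: υ.reverse) = s i * u⁻¹ := by rw [wordProd_cons, hπrev]
    have hform : t = (fun x : W => (π (i :: υ.reverse))⁻¹ * x * π (i :: υ.reverse)) (s i) := by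
      show t = (π (i :: υ.reverse))⁻¹ * s i * π (i :: υ.reverse)
      rw [hπc, mul_inv_rev, cs.inv_simple, inv_inv, ht]
      have h := cs.simple_mul_simple_self i
      calc u * s i * u⁻¹ = u * (s i * (s i * s i)) * u⁻¹ := by rw [h]; group
        _ = u * s i * (s i * (s i * u⁻¹)) := by group
      exact (mul_assoc (u * s i) (s i) (s i * u⁻¹)).symm
    rw [hform, List.count_map_of_injective _ _ hinj]
    apply cs.count_eq_zero_of_not_rightInversion hυred
    rw [← hυ]
    omega
  have hc3 : (ris υ.reverse).count t = 0 := by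
    apply cs.count_eq_zero_of_not_rightInversion ((cs.isReduced_reverse_iff υ).mpr hυred)
    rw [hπrev, ht]
    have heq : u⁻¹ * (u * s i * u⁻¹) = s i * u⁻¹ := by group
    rw [heq]
    have h1 : ℓ (s i * u⁻¹) = ℓ (u * s i) := by
      rw [← cs.length_inv]
      congr 1
      rw [mul_inv_rev, cs.inv_simple, inv_inv]
    rw [h1, cs.length_inv]
    omega
  have hcount : ((ris (σ ++ τ)).count t) = 1 := by
    rw [cs.ris_append, List.count_append, hc1, hτ, cs.ris_append, List.count_append]
    have : (cs.rightInvSeq (i :: υ.reverse)) = ((π υ.reverse)⁻¹ * s i * π υ.reverse)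
        :: ris υ.reverse := rfl
    rw [this, List.count_cons, hc2, hc3, hπrev, inv_inv]
    simp [← ht]
  by_contra hmem
  have h0 : (ris ω).count t = 0 := List.count_eq_zero.mpr hmem
  have := cs.count_ris_parity hπΞ.symm t
  rw [h0, hcount, pow_zero, pow_one] at this
  exact absurd this (by decide)

/-- Strong exchange property. -/
theorem mem_rightInvSeq_of_lt (ω : List B) {t : W} (ht : cs.IsReflection t)
    (hl : ℓ (π ω * t) < ℓ (π ω)) : t ∈ ris ω := by
  obtain ⟨u, i, rfl⟩ := ht
  rcases cs.length_mul_simple u i with h | h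
  · exact cs.mem_ris_aux ω u i (by omega) hl
  · have heq : u * s i * u⁻¹ = (u * s i) * s i * (u * s i)⁻¹ := by
      have hs := cs.simple_mul_simple_self i
      rw [mul_inv_rev, cs.inv_simple]
      calc u * s i * u⁻¹ = u * (s i * s i) * s i * u⁻¹ := by rw [hs]; group
        _ = u * s i * s i * (s i * u⁻¹) := by group
    rw [heq] at hl ⊢
    apply cs.mem_ris_aux ω (u * s i) i _ hl
    have h2 : ℓ (u * s i * s i) = ℓ u := by
      rw [mul_assoc, cs.simple_mul_simple_self, mul_one]
    omega

/-- Strong exchange, eraseIdx form. -/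
theorem exists_eraseIdx_of_lt (ω : List B) {t : W} (ht : cs.IsReflection t)
    (hl : ℓ (π ω * t) < ℓ (π ω)) :
    ∃ j, j < ω.length ∧ π (ω.eraseIdx j) = π ω * t := by
  have hmem := cs.mem_rightInvSeq_of_lt ω ht hl
  obtain ⟨j, hj, hget⟩ := List.mem_iff_getElem.mp hmem
  refine ⟨j, by simpa using hj, ?_⟩
  rw [← cs.wordProd_mul_getD_rightInvSeq]
  congr 1
  rw [List.getD_eq_getElem _ _ hj, hget]

/-- One step down in the Bruhat order. -/
def chainStep (x y : W) : Prop := ∃ t, cs.IsReflection t ∧ y = x * t ∧ ℓ y < ℓ x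

theorem chainStep_mul_simple {x : W} {j : B} (h : ℓ (x * s j) < ℓ x) :
    cs.chainStep x (x * s j) :=
  ⟨s j, cs.isReflection_simple j, rfl, h⟩

theorem chainStep_simple_mul {x : W} {j : B} (h : ℓ (s j * x) < ℓ x) :
    cs.chainStep x (s j * x) := by
  refine ⟨x⁻¹ * s j * x, ⟨x⁻¹, j, by group⟩, by group, ?_⟩
  exact h

theorem wordProd_take_succ (ω : List B) (j : ℕ) (hj : j < ω.length) :
    π (ω.take (j + 1)) = π (ω.take j) * s (ω[j]'hj) := by
  rw [List.take_succ, wordProd_append, List.getElem?_eq_getElem hj]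
  simp

theorem exists_bad_index {ω : List B} (h : ¬ cs.IsReduced ω) :
    ∃ j, ∃ hj : j < ω.length, ℓ (π (ω.take (j + 1))) < ℓ (π (ω.take j)) := by
  by_contra hno
  push_neg at hno
  apply h
  have key : ∀ j, j ≤ ω.length → ℓ (π (ω.take j)) = j := by
    intro j hj
    induction j with
    | zero => simp
    | succ j ihj =>
        have hjlt : j < ω.length := by omega
        have h1 := ihj (by omega)
        have h2 := cs.wordProd_take_succ ω j hjlt
        rcases cs.length_mul_simple (π (ω.take j)) (ω[j]'hjlt) with hc | hc
        · rw [h2, hc, h1]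
        · exfalso
          have h3 := hno j hjlt
          rw [h2] at h3
          omega
  have hfin := key ω.length le_rfl
  rwa [List.take_length] at hfin

theorem exists_shorter {ω : List B} (h : ¬ cs.IsReduced ω) :
    ∃ ρ : List B, ρ.Sublist ω ∧ π ρ = π ω ∧ ρ.length + 2 = ω.length := by
  obtain ⟨j, hj, hlt⟩ := cs.exists_bad_index h
  have h2 : π (ω.take (j + 1)) = π (ω.take j) * s (ω[j]'hj) := cs.wordProd_take_succ ω j hj
  obtain ⟨k, hk, hkeq⟩ := cs.exists_eraseIdx_of_lt (ω.take j) (cs.isReflection_simple (ω[j]'hj))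
    (by rw [← h2]; exact hlt)
  refine ⟨(ω.take j).eraseIdx k ++ ω.drop (j + 1), ?_, ?_, ?_⟩
  · have hdrop : ω.drop j = (ω[j]'hj) :: ω.drop (j + 1) := List.drop_eq_getElem_cons hj
    have hsub : ((ω.take j).eraseIdx k ++ ω.drop (j + 1)).Sublist (ω.take j ++ ω.drop j) := by
      rw [hdrop]
      exact (List.eraseIdx_sublist _ k).append ((ω.drop (j + 1)).sublist_cons_self _)
    simpa [List.take_append_drop] using hsub
  · rw [wordProd_append, hkeq, ← h2]
    conv_rhs => rw [← List.take_append_drop (j + 1) ω, wordProd_append]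
  · have hk1 : ((ω.take j).eraseIdx k).length + 1 = (ω.take j).length :=
      List.length_eraseIdx_add_one hk
    have hk2 : (ω.take j).length = j := by
      rw [List.length_take]
      omega
    have hk3 : (ω.drop (j + 1)).length = ω.length - (j + 1) := List.length_drop
    simp only [List.length_append]
    omega

theorem exists_reduced_sublist (ω' : List B) :
    ∃ ρ : List B, ρ.Sublist ω' ∧ cs.IsReduced ρ ∧ π ρ = π ω' := by
  generalize hn : ω'.length = n
  induction n using Nat.strong_induction_on generalizing ω' with
  | _ n ihn =>
    by_cases h : cs.IsReduced ω'
    · exact ⟨ω', List.Sublist.refl _, h, rfl⟩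
    · obtain ⟨ρ, hsub, hprod, hlen⟩ := cs.exists_shorter h
      obtain ⟨ρ', h1, h2, h3⟩ := ihn ρ.length (by omega) ρ rfl
      exact ⟨ρ', h1.trans hsub, h2, h3.trans hprod⟩

/-- Chains descend to reduced subwords of any reduced word. -/
theorem exists_reduced_sublist_of_chain {v u : W}
    (h : Relation.ReflTransGen cs.chainStep v u) :
    ∀ ω : List B, cs.IsReduced ω → π ω = v →
      ∃ σ : List B, σ.Sublist ω ∧ cs.IsReduced σ ∧ π σ = u := by
  induction h using Relation.ReflTransGen.head_induction_on with
  | refl => exact fun ω hred hprod => ⟨ω, List.Sublist.refl _, hred, hprod⟩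
  | head hstep _ ihc =>
      rename_i a c _
      intro ω hred hprod
      obtain ⟨t, htrefl, hc, hlt⟩ := hstep
      obtain ⟨j, hj, hkeq⟩ := cs.exists_eraseIdx_of_lt ω htrefl
        (by rw [hprod, ← hc]; exact hlt)
      obtain ⟨ρ, hsub, hρred, hρprod⟩ := cs.exists_reduced_sublist (ω.eraseIdx j)
      obtain ⟨σ, h1, h2, h3⟩ := ihc ρ hρred (by rw [hρprod, hkeq, hprod, ← hc])
      exact ⟨σ, h1.trans (hsub.trans (ω.eraseIdx_sublist j)), h2, h3⟩

theorem sublist_concat_cases {ω' ρ : List B} {j : B} (h : ω'.Sublist (ρ ++ [j])) :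
    ω'.Sublist ρ ∨ ∃ a : List B, a.Sublist ρ ∧ ω' = a ++ [j] := by
  rcases List.sublist_append_iff.mp h with ⟨a, b, rfl, ha, hb⟩
  rcases List.sublist_singleton.mp hb with rfl | rfl
  · left; simpa using ha
  · right; exact ⟨a, ha, rfl⟩

theorem triple (n : ℕ) :
    (∀ v : W, ℓ v = n → ∀ ω : List B, cs.IsReduced ω → π ω = v → ∀ ω' : List B, ω'.Sublist ω →
        Relation.ReflTransGen cs.chainStep v (π ω')) ∧
    (∀ v : W, ℓ v = n → ∀ (u : W) (j : B), Relation.ReflTransGen cs.chainStep v u →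
        ℓ u < ℓ (u * s j) → ℓ (v * s j) < ℓ v →
        Relation.ReflTransGen cs.chainStep v (u * s j)) ∧
    (∀ v : W, ℓ v = n → ∀ (u : W) (j : B), Relation.ReflTransGen cs.chainStep v u →
        ℓ u < ℓ (u * s j) → ℓ v < ℓ (v * s j) →
        Relation.ReflTransGen cs.chainStep (v * s j) (u * s j)) := by
  induction n using Nat.strong_induction_on with
  | _ n ih =>
  have hSW : ∀ v : W, ℓ v = n → ∀ ω : List B, cs.IsReduced ω → π ω = v →
      ∀ ω' : List B, ω'.Sublist ω → Relation.ReflTransGen cs.chainStep v (π ω') := by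
    intro v hn ω hred hprod ω' hsub
    rcases List.eq_nil_or_concat ω with rfl | ⟨ω₁, j, rfl⟩
    · have : ω' = [] := List.sublist_nil.mp hsub
      subst this
      rw [← hprod]
    · rw [List.concat_eq_append] at hsub hred hprod
      set v₁ := π ω₁ with hv₁
      have hω₁red : cs.IsReduced ω₁ := by
        have := hred.take ω₁.length
        rwa [List.take_left] at this
      have hv : v = v₁ * s j := by rw [← hprod, wordProd_append, wordProd_singleton]
      have hlv : ℓ v = ω₁.length + 1 := by
        have h' : ℓ v = (ω₁ ++ [j]).length := by rw [← hprod]; exact hred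
        simpa using h' 
      have hlv₁ : ℓ v₁ = ω₁.length := hω₁red
      have hstep : cs.chainStep v v₁ := by
        have hvs : v * s j = v₁ := by
          rw [hv, mul_assoc, cs.simple_mul_simple_self, mul_one]
        have := cs.chainStep_mul_simple (x := v) (j := j) (by rw [hvs]; omega)
        rwa [hvs] at this
      rcases sublist_concat_cases hsub with h1 | ⟨a, ha, rfl⟩
      · have hrec := (ih ω₁.length (by omega)).1 v₁ hlv₁ ω₁ hω₁red rfl ω' h1
        exact Relation.ReflTransGen.head hstep hrec
      · have hrec := (ih ω₁.length (by omega)).1 v₁ hlv₁ ω₁ hω₁red rfl a ha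
        rw [wordProd_append, wordProd_singleton]
        set u₂ := π a with hu₂
        rcases cs.length_mul_simple u₂ j with hc | hc
        · -- length goes up: lifting
          have hlf := (ih ω₁.length (by omega)).2.2 v₁ hlv₁ u₂ j hrec (by omega)
            (by rw [← hv]; omega)
          rwa [← hv] at hlf
        · -- length goes down: chain step from u₂
          have hstep2 : cs.chainStep u₂ (u₂ * s j) := cs.chainStep_mul_simple (by omega)
          exact Relation.ReflTransGen.head hstep
            (hrec.trans (Relation.ReflTransGen.single hstep2))
  have hLF2 : ∀ v : W, ℓ v = n → ∀ (u : W) (j : B), Relation.ReflTransGen cs.chainStep v u →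
      ℓ u < ℓ (u * s j) → ℓ (v * s j) < ℓ v →
      Relation.ReflTransGen cs.chainStep v (u * s j) := by
    intro v hn u j hRTG hu hv
    have hvj : ℓ (v * s j) + 1 = ℓ v := by
      rcases cs.length_mul_simple v j with hc | hc
      · omega
      · exact hc
    obtain ⟨ρ, hρred, hρ⟩ := cs.exists_reduced_word' (v * s j)
    have hπω : π (ρ ++ [j]) = v := by
      rw [wordProd_append, wordProd_singleton, ← hρ, mul_assoc, cs.simple_mul_simple_self,
        mul_one]
    have hωred : cs.IsReduced (ρ ++ [j]) := by
      show ℓ (π (ρ ++ [j])) = _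
      rw [hπω, List.length_append]
      have : ℓ (v * s j) = ρ.length := by rw [hρ]; exact hρred
      simp only [List.length_singleton]
      omega
    obtain ⟨σ, hσsub, hσred, hσprod⟩ := cs.exists_reduced_sublist_of_chain hRTG
      (ρ ++ [j]) hωred hπω
    rcases sublist_concat_cases hσsub with h1 | ⟨a, ha, rfl⟩
    · have := hSW v hn (ρ ++ [j]) hωred hπω (σ ++ [j]) (h1.append (List.Sublist.refl [j]))
      rwa [wordProd_append, wordProd_singleton, hσprod] at this
    · exfalso
      have h1 : u * s j = π a := by
        rw [← hσprod, wordProd_append, wordProd_singleton, mul_assoc,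
          cs.simple_mul_simple_self, mul_one]
      have h2 : ℓ u = a.length + 1 := by
        rw [← hσprod]
        have h' : ℓ (π (a ++ [j])) = (a ++ [j]).length := hσred
        simpa using h' 
      have h3 : ℓ (u * s j) ≤ a.length := by
        rw [h1]
        exact cs.length_wordProd_le a
      omega
  refine ⟨hSW, hLF2, ?_⟩
  intro v hn u j hRTG hu hv
  rcases Relation.ReflTransGen.cases_head hRTG with rfl | ⟨x₁, hstep, hrest⟩
  · exact Relation.ReflTransGen.refl
  · obtain ⟨t, htrefl, hx₁, hlt⟩ := hstep
    rcases cs.length_mul_simple x₁ j with hc | hc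
    · -- x₁ * s j goes up
      have hlf := (ih (ℓ x₁) (by omega)).2.2 x₁ rfl u j hrest (by omega) (by omega)
      have htrefl' : cs.IsReflection (s j * t * s j) := by
        have := htrefl.conj (s j)
        rwa [cs.inv_simple] at this
      have heq : v * s j * (s j * t * s j) = x₁ * s j := by
        rw [hx₁]
        calc v * s j * (s j * t * s j) = v * (s j * s j) * t * s j := by group
          _ = v * t * s j := by rw [cs.simple_mul_simple_self]; group
      have hstep' : cs.chainStep (v * s j) (x₁ * s j) :=
        ⟨s j * t * s j, htrefl', heq.symm, by omega⟩
      exact Relation.ReflTransGen.head hstep' hlf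
    · have hlf2 := (ih (ℓ x₁) (by omega)).2.1 x₁ rfl u j hrest (by omega) (by omega)
      have hs1 : cs.chainStep (v * s j) v := by
        have hvv : v * s j * s j = v := by
          rw [mul_assoc, cs.simple_mul_simple_self, mul_one]
        have := cs.chainStep_mul_simple (x := v * s j) (j := j) (by rw [hvv]; omega)
        rwa [hvv] at this
      have hs2 : cs.chainStep v x₁ := ⟨t, htrefl, hx₁, hlt⟩
      exact Relation.ReflTransGen.head hs1 (Relation.ReflTransGen.head hs2 hlf2)

/-- The set of products of sublists of `ω`. -/
def Dset (ω : List B) : Finset W := (ω.sublists.map cs.wordProd).toFinset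

theorem mem_Dset {ω : List B} {x : W} :
    x ∈ cs.Dset ω ↔ ∃ τ : List B, τ.Sublist ω ∧ π τ = x := by
  simp [Dset, List.mem_sublists]

theorem mem_Dset_iff_chain {ω : List B} (hred : cs.IsReduced ω) {x : W} :
    x ∈ cs.Dset ω ↔ Relation.ReflTransGen cs.chainStep (π ω) x := by
  constructor
  · intro h
    obtain ⟨τ, hsub, rfl⟩ := cs.mem_Dset.mp h
    exact (cs.triple (ℓ (π ω))).1 (π ω) rfl ω hred rfl τ hsub
  · intro h
    obtain ⟨σ, hsub, _, hprodσ⟩ := cs.exists_reduced_sublist_of_chain h ω hred rfl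
    exact cs.mem_Dset.mpr ⟨σ, hsub, hprodσ⟩

theorem mem_Dset_reduced {ω : List B} (hred : cs.IsReduced ω) {x : W} (h : x ∈ cs.Dset ω) :
    ∃ σ : List B, σ.Sublist ω ∧ cs.IsReduced σ ∧ π σ = x :=
  cs.exists_reduced_sublist_of_chain ((cs.mem_Dset_iff_chain hred).mp h) ω hred rfl

theorem simple_mul_mem_Dset {ω₁ : List B} (hred : cs.IsReduced ω₁) {i : B} {x : W}
    (hx : x ∈ cs.Dset ω₁) (hlt : ℓ (s i * x) < ℓ x) : s i * x ∈ cs.Dset ω₁ := by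
  rw [cs.mem_Dset_iff_chain hred] at hx ⊢
  exact hx.trans (Relation.ReflTransGen.single (cs.chainStep_simple_mul hlt))

theorem simple_mul_simple_mul_cancel (i : B) (x : W) : s i * (s i * x) = x := by
  rw [← mul_assoc, cs.simple_mul_simple_self, one_mul]

theorem Dset_cons {ω₁ : List B} {i : B} (hred₁ : cs.IsReduced ω₁) :
    cs.Dset (i :: ω₁) =
      ((cs.Dset ω₁).filter (fun u => ℓ u < ℓ (s i * u))) ∪
      (((cs.Dset ω₁).filter (fun u => ℓ u < ℓ (s i * u))).image (fun u => s i * u)) := by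
  ext x
  simp only [Finset.mem_union, Finset.mem_filter, Finset.mem_image]
  constructor
  · intro hx
    obtain ⟨τ, hsub, rfl⟩ := cs.mem_Dset.mp hx
    rcases List.sublist_cons_iff.mp hsub with h1 | ⟨τ₁, rfl, hτ₁⟩
    · have hx₁ : π τ ∈ cs.Dset ω₁ := cs.mem_Dset.mpr ⟨τ, h1, rfl⟩
      rcases cs.length_simple_mul (π τ) i with hc | hc
      · exact Or.inl ⟨hx₁, by omega⟩
      · refine Or.inr ⟨s i * π τ, ⟨cs.simple_mul_mem_Dset hred₁ hx₁ (by omega), ?_⟩,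
          cs.simple_mul_simple_mul_cancel i (π τ)⟩
        rw [cs.simple_mul_simple_mul_cancel i (π τ)]
        omega
    · rw [wordProd_cons]
      have hy₁ : π τ₁ ∈ cs.Dset ω₁ := cs.mem_Dset.mpr ⟨τ₁, hτ₁, rfl⟩
      rcases cs.length_simple_mul (π τ₁) i with hc | hc
      · exact Or.inr ⟨π τ₁, ⟨hy₁, by omega⟩, rfl⟩
      · refine Or.inl ⟨cs.simple_mul_mem_Dset hred₁ hy₁ (by omega), ?_⟩
        rw [cs.simple_mul_simple_mul_cancel i (π τ₁)]
        omega
  · rintro (⟨hx₁, _⟩ | ⟨y, ⟨hy₁, _⟩, rfl⟩)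
    · obtain ⟨τ, hsub, rfl⟩ := cs.mem_Dset.mp hx₁
      exact cs.mem_Dset.mpr ⟨τ, hsub.cons i, rfl⟩
    · obtain ⟨τ, hsub, rfl⟩ := cs.mem_Dset.mp hy₁
      exact cs.mem_Dset.mpr ⟨i :: τ, hsub.cons₂ i, by rw [wordProd_cons]⟩

theorem projSimple_apply_lt (i : B) (w : W) :
    ℓ (cs.projSimple i w) < ℓ (cs.projSimple i w * s i) := by
  unfold projSimple
  by_cases h : ℓ (w * s i) < ℓ w
  · rw [if_pos h]
    have he : w * s i * s i = w := by rw [mul_assoc, cs.simple_mul_simple_self, mul_one]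
    rw [he]
    exact h
  · rw [if_neg h]
    rcases cs.length_mul_simple w i with hc | hc
    · omega
    · omega

theorem projSimple_eq_self {i : B} {w : W} (h : ¬ ℓ (w * s i) < ℓ w) :
    cs.projSimple i w = w := if_neg h

theorem projSimple_idem (i : B) (w : W) :
    cs.projSimple i (cs.projSimple i w) = cs.projSimple i w :=
  cs.projSimple_eq_self (by have := cs.projSimple_apply_lt i w; omega)

theorem projWord_cons (i : B) (ω : List B) :
    cs.projWord (i :: ω) = cs.projSimple i ∘ cs.projWord ω := rfl

theorem projS_mul_lmap (i : B) (g : W → W) :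
    cs.projS i * Finsupp.lmapDomain ℤ ℤ g = Finsupp.lmapDomain ℤ ℤ (cs.projSimple i ∘ g) := by
  show (cs.projS i).comp (Finsupp.lmapDomain ℤ ℤ g) = _
  rw [CoxeterSystem.projS, ← Finsupp.lmapDomain_comp]

theorem projBar_eq_sum (PU : W → Module.End ℤ (W →₀ ℤ))
    (hPU : ∀ (u : W) (ω' : List B), cs.IsReduced ω' → cs.wordProd ω' = u →
      PU u = Finsupp.lmapDomain ℤ ℤ (cs.projWord ω')) :
    ∀ ω : List B, cs.IsReduced ω →
      cs.projBarWord ω = ∑ u ∈ cs.Dset ω, ((-1 : ℤ) ^ ℓ u) • PU u := by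
  intro ω
  induction ω with
  | nil =>
      intro _
      have hD : cs.Dset ([] : List B) = {1} := by
        ext x
        rw [cs.mem_Dset]
        simp only [Finset.mem_singleton, List.sublist_nil]
        constructor
        · rintro ⟨τ, rfl, rfl⟩; simp
        · rintro rfl; exact ⟨[], rfl, by simp⟩
      rw [hD, Finset.sum_singleton,
        hPU 1 [] (by show ℓ (π ([] : List B)) = _; simp) (by simp), cs.length_one, pow_zero,
        one_smul, show cs.projWord [] = id from rfl, Finsupp.lmapDomain_id]
      rfl
  | cons i ω₁ ihω =>
      intro hred
      have hred₁ : cs.IsReduced ω₁ := by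
        have := hred.drop 1
        simpa using this
      have hIH := ihω hred₁
      have hstep : cs.projBarWord (i :: ω₁) = (1 - cs.projS i) * cs.projBarWord ω₁ := rfl
      have key : ∀ u ∈ cs.Dset ω₁,
          (1 - cs.projS i) * (((-1 : ℤ) ^ ℓ u) • PU u) =
          (if ℓ u < ℓ (s i * u)
           then ((-1 : ℤ) ^ ℓ u) • PU u + ((-1 : ℤ) ^ ℓ (s i * u)) • PU (s i * u)
           else 0) := by
        intro u hu
        obtain ⟨ρ, hρsub, hρred, hρprod⟩ := cs.mem_Dset_reduced hred₁ hu
        have hρlen : ℓ u = ρ.length := by rw [← hρprod]; exact hρred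
        by_cases hup : ℓ u < ℓ (s i * u)
        · rw [if_pos hup]
          have h4 : ℓ (s i * u) = ℓ u + 1 := by
            rcases cs.length_simple_mul u i with hc | hc
            · exact hc
            · omega
          have hred' : cs.IsReduced (i :: ρ) := by
            show ℓ (π (i :: ρ)) = _
            rw [wordProd_cons, hρprod]
            simp only [List.length_cons]
            omega
          have h1 : PU u = Finsupp.lmapDomain ℤ ℤ (cs.projWord ρ) := hPU u ρ hρred hρprod
          have h2 : PU (s i * u) = Finsupp.lmapDomain ℤ ℤ (cs.projWord (i :: ρ)) :=
            hPU _ _ hred' (by rw [wordProd_cons, hρprod])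
          have h3 : cs.projS i * PU u = PU (s i * u) := by
            rw [h1, h2, cs.projWord_cons]
            exact cs.projS_mul_lmap i _
          rw [sub_mul, one_mul, mul_smul_comm, h3, h4, pow_succ]
          have hsgn : ((-1 : ℤ) ^ ℓ u * -1) = -((-1 : ℤ) ^ ℓ u) := by ring
          rw [hsgn, neg_smul]
          abel
        · rw [if_neg hup]
          have h4 : ℓ (s i * u) + 1 = ℓ u := by
            rcases cs.length_simple_mul u i with hc | hc
            · omega
            · exact hc
          obtain ⟨ρ', hρ'red, hρ'⟩ := cs.exists_reduced_word' (s i * u)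
          have hρ'prod : π (i :: ρ') = u := by
            rw [wordProd_cons, ← hρ', cs.simple_mul_simple_mul_cancel]
          have hred' : cs.IsReduced (i :: ρ') := by
            show ℓ (π (i :: ρ')) = _
            rw [hρ'prod]
            have : ℓ (s i * u) = ρ'.length := by rw [hρ']; exact hρ'red
            simp only [List.length_cons]
            omega
          have h1 : PU u = Finsupp.lmapDomain ℤ ℤ (cs.projWord (i :: ρ')) :=
            hPU u _ hred' hρ'prod
          have h3 : cs.projS i * PU u = PU u := by
            rw [h1, cs.projWord_cons, cs.projS_mul_lmap]
            congr 1
            funext w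
            exact cs.projSimple_idem i _
          rw [sub_mul, one_mul, mul_smul_comm, h3, sub_self]
      rw [hstep, hIH, Finset.mul_sum, Finset.sum_congr rfl key, ← Finset.sum_filter,
        Finset.sum_add_distrib]
      have himg : ∑ u ∈ (cs.Dset ω₁).filter (fun u => ℓ u < ℓ (s i * u)),
          ((-1 : ℤ) ^ ℓ (s i * u)) • PU (s i * u)
          = ∑ x ∈ ((cs.Dset ω₁).filter (fun u => ℓ u < ℓ (s i * u))).image (fun u => s i * u),
            ((-1 : ℤ) ^ ℓ x) • PU x := by
        rw [Finset.sum_image]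
        intro x _ y _ hxy
        exact mul_left_cancel hxy
      have hdisj : Disjoint ((cs.Dset ω₁).filter (fun u => ℓ u < ℓ (s i * u)))
          (((cs.Dset ω₁).filter (fun u => ℓ u < ℓ (s i * u))).image (fun u => s i * u)) := by
        rw [Finset.disjoint_left]
        rintro a ha hb
        obtain ⟨-, ha2⟩ := Finset.mem_filter.mp ha
        obtain ⟨y, hy, rfl⟩ := Finset.mem_image.mp hb
        obtain ⟨-, hy2⟩ := Finset.mem_filter.mp hy
        rw [cs.simple_mul_simple_mul_cancel] at ha2
        omega
      rw [himg, ← Finset.sum_union hdisj, ← cs.Dset_cons hred₁]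

end SE

end CoxeterSystem

theorem stmt_15 (cs : CoxeterSystem M W) (v : W)
    (ω : List B) (hred : cs.IsReduced ω) (hprod : cs.wordProd ω = v)
    (PU : W → Module.End ℤ (W →₀ ℤ))
    (hPU : ∀ (u : W) (ω' : List B), cs.IsReduced ω' → cs.wordProd ω' = u →
      PU u = Finsupp.lmapDomain ℤ ℤ (cs.projWord ω'))
    (F : Finset W) (hF : ∀ u : W, u ∈ F ↔ cs.bruhatLE u v) :
    cs.projBarWord ω = ∑ u ∈ F, ((-1 : ℤ) ^ cs.length u) • PU u := by
  classical
  have hDF : F = cs.Dset ω := by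
    ext u
    rw [hF]
    constructor
    · rintro ⟨ω2, hred2, hprod2, ω3, hsub3, hprod3⟩
      have hchain : Relation.ReflTransGen cs.chainStep v u := by
        have := (cs.triple (cs.length v)).1 v rfl ω2 hred2 hprod2 ω3 hsub3
        rwa [hprod3] at this
      exact (cs.mem_Dset_iff_chain hred).mpr (by rwa [hprod])
    · intro hu
      obtain ⟨τ, hsub, hprodτ⟩ := cs.mem_Dset.mp hu
      exact ⟨ω, hred, hprod, τ, hsub, hprodτ⟩
  rw [hDF]
  exact cs.projBar_eq_sum PU hPU ω hred
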